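/- Let X, Θ, Y be separable real Hilbert spaces, U = X × Θ with norm ‖(x,θ)‖_U² = ‖x‖_X² + ‖θ‖_Θ², F : U → Y Lipschitz with constant L, E : U → Y Lipschitz with constant at most R with ‖E(0)‖_Y ≤ B, and h(u) = ‖F(u) − E(u)‖_Y². Let ν, ν' be Borel probability measures on U with finite second moments m_ν = ∫‖u‖_U² dν and m_{ν'} = ∫‖u‖_U² dν', and let γ be any coupling of ν and ν' (a Borel probability measure on U × U with marginals ν and ν'). Then with C₁ = L + R and C₂ = ‖F(0)‖_Y + B, |∫ h dν' − ∫ h dν| ≤ (C₁² √(2(m_ν + m_{ν'})) + 2C₁C₂) · (∫ ‖u − v‖_U² dγ(u,v))^{1/2}. -/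

import Mathlib

open MeasureTheory
open scoped ENNReal NNReal

noncomputable section

/-- The Hilbert norm on the product `U = X × Θ`: `‖(x, θ)‖_U = √(‖x‖² + ‖θ‖²)`. -/
def nU {X Θ : Type*} [NormedAddCommGroup X] [NormedAddCommGroup Θ] (u : X × Θ) : ℝ :=
  Real.sqrt (‖u.1‖ ^ 2 + ‖u.2‖ ^ 2)


section nUlem
variable {X Θ : Type*} [NormedAddCommGroup X] [NormedAddCommGroup Θ]

lemma nU_nonneg (u : X × Θ) : 0 ≤ nU u := Real.sqrt_nonneg _

lemma nU_eq (u : X × Θ) : nU u = ‖(WithLp.equiv 2 (X × Θ)).symm u‖ := by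
  rw [WithLp.prod_norm_eq_of_L2]; rfl

lemma nU_add_le (u v : X × Θ) : nU (u + v) ≤ nU u + nU v := by
  simp only [nU_eq, show (WithLp.equiv 2 (X × Θ)).symm (u + v) = (WithLp.equiv 2 (X × Θ)).symm u + (WithLp.equiv 2 (X × Θ)).symm v from rfl]
  exact norm_add_le _ _

lemma nU_neg (u : X × Θ) : nU (-u) = nU u := by simp [nU]

lemma nU_sub_comm (u v : X × Θ) : nU (u - v) = nU (v - u) := by
  rw [← nU_neg (u - v), neg_sub]

lemma nU_sub_le (u v : X × Θ) : nU (u - v) ≤ nU u + nU v := by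
  rw [sub_eq_add_neg]
  exact (nU_add_le u (-v)).trans (by rw [nU_neg])

lemma nU_sq (u : X × Θ) : nU u ^ 2 = ‖u.1‖ ^ 2 + ‖u.2‖ ^ 2 :=
  Real.sq_sqrt (by positivity)

lemma nU_le_sqrt2 (u : X × Θ) : nU u ≤ Real.sqrt 2 * ‖u‖ := by
  have h1 : ‖u.1‖ ^ 2 + ‖u.2‖ ^ 2 ≤ 2 * ‖u‖ ^ 2 := by
    have h1 := norm_fst_le u
    have h2 := norm_snd_le u
    nlinarith [norm_nonneg u.1, norm_nonneg u.2]
  calc nU u ≤ Real.sqrt (2 * ‖u‖ ^ 2) := Real.sqrt_le_sqrt h1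
  _ = Real.sqrt 2 * ‖u‖ := by
      rw [Real.sqrt_mul (by norm_num), Real.sqrt_sq (norm_nonneg u)]

lemma nU_continuous : Continuous (nU : X × Θ → ℝ) := by
  apply Continuous.sqrt
  exact ((continuous_fst.norm.pow 2).add (continuous_snd.norm.pow 2))

lemma nU_pos {u : X × Θ} (hu : u ≠ 0) : 0 < nU u := by
  apply Real.sqrt_pos.mpr
  rcases eq_or_ne u.1 0 with h1 | h1
  · have h2 : u.2 ≠ 0 := by
      intro h2
      exact hu (Prod.ext h1 h2)
    have := norm_pos_iff.mpr h2
    nlinarith [sq_nonneg ‖u.1‖]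
  · have := norm_pos_iff.mpr h1
    nlinarith [sq_nonneg ‖u.2‖]

end nUlem

lemma cs_integral {α : Type*} [MeasurableSpace α] {μ : Measure α} {f g : α → ℝ}
    (hf0 : ∀ x, 0 ≤ f x) (hg0 : ∀ x, 0 ≤ g x)
    (hfm : AEStronglyMeasurable f μ) (hgm : AEStronglyMeasurable g μ)
    (hf2 : Integrable (fun x => f x ^ 2) μ) (hg2 : Integrable (fun x => g x ^ 2) μ) :
    ∫ x, f x * g x ∂μ ≤ Real.sqrt (∫ x, f x ^ 2 ∂μ) * Real.sqrt (∫ x, g x ^ 2 ∂μ) := by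
  have hpq : Real.HolderConjugate 2 2 := Real.HolderConjugate.two_two
  have h2 : ENNReal.ofReal (2 : ℝ) = 2 := by norm_num
  have hfL : MemLp f (ENNReal.ofReal (2:ℝ)) μ := by
    rw [h2]; exact (memLp_two_iff_integrable_sq hfm).mpr hf2
  have hgL : MemLp g (ENNReal.ofReal (2:ℝ)) μ := by
    rw [h2]; exact (memLp_two_iff_integrable_sq hgm).mpr hg2
  have h := MeasureTheory.integral_mul_le_Lp_mul_Lq_of_nonneg hpq
    (Filter.Eventually.of_forall hf0) (Filter.Eventually.of_forall hg0) hfL hgL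
  have e : ∀ (k : α → ℝ), (∫ x, k x ^ (2:ℝ) ∂μ) ^ ((1:ℝ)/2) = Real.sqrt (∫ x, k x ^ 2 ∂μ) := by
    intro k
    rw [Real.sqrt_eq_rpow]
    congr 1
    refine integral_congr_ae (Filter.Eventually.of_forall fun x => ?_)
    show k x ^ (2:ℝ) = k x ^ (2:ℕ)
    rw [show ((2:ℝ)) = ((2:ℕ):ℝ) by norm_num, Real.rpow_natCast]
  rw [e f, e g] at h
  exact h

/-- The 2-Wasserstein distance associated with a cost function `d`: the infimum over all
couplings `γ` of `μ` and `μ'` (i.e. probability measures on the product whose marginals are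
`μ` and `μ'`) of `(∫ d(u,v)² dγ)^{1/2}`. -/
def W2 {α : Type*} [MeasurableSpace α] (d : α → α → ℝ) (μ μ' : Measure α) : ℝ :=
  sInf { r : ℝ | ∃ γ : Measure (α × α), IsProbabilityMeasure γ ∧
      γ.map Prod.fst = μ ∧ γ.map Prod.snd = μ' ∧
      r = Real.sqrt (∫ p, d p.1 p.2 ^ 2 ∂γ) }

/-- The squared-error risk `R_ν(E) = ∫ ‖F(u) - E(u)‖² dν(u)`. -/
def risk {X Θ Y : Type*} [NormedAddCommGroup X] [NormedAddCommGroup Θ] [NormedAddCommGroup Y]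
    [MeasurableSpace X] [MeasurableSpace Θ] (F E : X × Θ → Y) (ν : Measure (X × Θ)) : ℝ :=
  ∫ u, ‖F u - E u‖ ^ 2 ∂ν

/-- The hypothesis class `H`: all maps `E : U → Y` that are Lipschitz with constant at most
`R₀` (with respect to the Hilbert product norm on `U`) and satisfy `‖E 0‖ ≤ B`. -/
def Hclass {X Θ Y : Type*} [NormedAddCommGroup X] [NormedAddCommGroup Θ] [NormedAddCommGroup Y]
    (R₀ B : ℝ) : Set (X × Θ → Y) :=
  { E | (∀ u v, ‖E u - E v‖ ≤ R₀ * nU (u - v)) ∧ ‖E 0‖ ≤ B }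

/-- The constant `c(ν,ν') = C₁² √(2(∫‖u‖_U² dν + ∫‖u‖_U² dν')) + 2 C₁ C₂`, where
`C₁ = L + R₀` and `C₂ = ‖F 0‖ + B`. -/
def cShift {X Θ Y : Type*} [NormedAddCommGroup X] [NormedAddCommGroup Θ] [NormedAddCommGroup Y]
    [MeasurableSpace X] [MeasurableSpace Θ] (L R₀ B : ℝ) (F : X × Θ → Y)
    (ν ν' : Measure (X × Θ)) : ℝ :=
  (L + R₀) ^ 2 * Real.sqrt (2 * ((∫ u, nU u ^ 2 ∂ν) + ∫ u, nU u ^ 2 ∂ν'))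
    + 2 * (L + R₀) * (‖F 0‖ + B)

/-- The bound objective `J(ν) = inf_{E ∈ H} R_ν(E) + c(ν, ν_dep) W₂(ν, ν_dep)`, where the
Wasserstein distance on `U = X × Θ` is taken with respect to the Hilbert product norm. -/
def Jobj {X Θ Y : Type*} [NormedAddCommGroup X] [NormedAddCommGroup Θ] [NormedAddCommGroup Y]
    [MeasurableSpace X] [MeasurableSpace Θ] (L R₀ B : ℝ) (F : X × Θ → Y)
    (νdep ν : Measure (X × Θ)) : ℝ :=
  sInf ((fun E => risk F E ν) '' Hclass R₀ B)
    + cShift L R₀ B F ν νdep * W2 (fun u v => nU (u - v)) ν νdep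

variable {X Θ Y : Type*}
  [NormedAddCommGroup X] [InnerProductSpace ℝ X] [CompleteSpace X]
  [SecondCountableTopology X] [MeasurableSpace X] [BorelSpace X]
  [NormedAddCommGroup Θ] [InnerProductSpace ℝ Θ] [CompleteSpace Θ]
  [SecondCountableTopology Θ] [MeasurableSpace Θ] [BorelSpace Θ]
  [NormedAddCommGroup Y] [InnerProductSpace ℝ Y] [CompleteSpace Y]
  [SecondCountableTopology Y]

set_option maxHeartbeats 1000000 in
/-- For any coupling `γ` of `ν` and `ν'`, the shift of the expected squared
error is controlled by `c(ν,ν')` times the square root of the transport cost of `γ`. -/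
theorem expected_sqErr_shift_coupling (F E : X × Θ → Y) (L R B : ℝ)
    (hF : ∀ u v : X × Θ, ‖F u - F v‖ ≤ L * nU (u - v))
    (hE : ∀ u v : X × Θ, ‖E u - E v‖ ≤ R * nU (u - v))
    (hE0 : ‖E 0‖ ≤ B)
    (h : X × Θ → ℝ) (hh : ∀ u, h u = ‖F u - E u‖ ^ 2)
    (ν ν' : Measure (X × Θ)) [IsProbabilityMeasure ν] [IsProbabilityMeasure ν']
    (hν : Integrable (fun u => nU u ^ 2) ν) (hν' : Integrable (fun u => nU u ^ 2) ν')
    (γ : Measure ((X × Θ) × (X × Θ))) [IsProbabilityMeasure γ]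
    (hfst : γ.map Prod.fst = ν) (hsnd : γ.map Prod.snd = ν') :
    |(∫ u, h u ∂ν') - ∫ u, h u ∂ν|
      ≤ ((L + R) ^ 2 * Real.sqrt (2 * ((∫ u, nU u ^ 2 ∂ν) + ∫ u, nU u ^ 2 ∂ν'))
            + 2 * (L + R) * (‖F 0‖ + B))
        * Real.sqrt (∫ p, nU (p.1 - p.2) ^ 2 ∂γ) := by
  classical
  by_cases htriv : ∃ u v : X × Θ, u ≠ v
  case neg =>
    push_neg at htriv
    have h1 : (∫ p, nU (p.1 - p.2) ^ 2 ∂γ) = 0 := by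
      have : ∀ p : (X × Θ) × (X × Θ), nU (p.1 - p.2) ^ 2 = 0 := by
        intro p; rw [htriv p.1 p.2]; simp [nU]
      simp only [this, integral_zero]
    have hconst : ∀ u : X × Θ, h u = h 0 := fun u => by rw [htriv u 0]
    have h2 : (∫ u, h u ∂ν') = h 0 := by simp only [hconst]; simp
    have h3 : (∫ u, h u ∂ν) = h 0 := by simp only [hconst]; simp
    rw [h1, h2, h3]
    simp
  case pos =>
  obtain ⟨u₀, v₀, huv⟩ := htriv
  have hn0 : 0 < nU (u₀ - v₀) := nU_pos (sub_ne_zero.mpr huv)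
  have hL : 0 ≤ L := by
    have h1 := (norm_nonneg (F u₀ - F v₀)).trans (hF u₀ v₀)
    nlinarith
  have hR : 0 ≤ R := by
    have h1 := (norm_nonneg (E u₀ - E v₀)).trans (hE u₀ v₀)
    nlinarith
  have hB : 0 ≤ B := (norm_nonneg _).trans hE0
  set c1 := L + R with hc1
  set c2 := ‖F 0‖ + B with hc2
  have hc1n : 0 ≤ c1 := add_nonneg hL hR
  have hc2n : 0 ≤ c2 := add_nonneg (norm_nonneg _) hB
  -- continuity
  have hFc : Continuous F := by
    refine (LipschitzWith.of_dist_le_mul (K := (L * Real.sqrt 2).toNNReal)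
      (fun u v => ?_)).continuous
    rw [Real.coe_toNNReal _ (by positivity)]
    calc dist (F u) (F v) = ‖F u - F v‖ := dist_eq_norm _ _
    _ ≤ L * nU (u - v) := hF u v
    _ ≤ L * (Real.sqrt 2 * ‖u - v‖) := mul_le_mul_of_nonneg_left (nU_le_sqrt2 _) hL
    _ = L * Real.sqrt 2 * dist u v := by rw [dist_eq_norm]; ring
  have hEc : Continuous E := by
    refine (LipschitzWith.of_dist_le_mul (K := (R * Real.sqrt 2).toNNReal)
      (fun u v => ?_)).continuous
    rw [Real.coe_toNNReal _ (by positivity)]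
    calc dist (E u) (E v) = ‖E u - E v‖ := dist_eq_norm _ _
    _ ≤ R * nU (u - v) := hE u v
    _ ≤ R * (Real.sqrt 2 * ‖u - v‖) := mul_le_mul_of_nonneg_left (nU_le_sqrt2 _) hR
    _ = R * Real.sqrt 2 * dist u v := by rw [dist_eq_norm]; ring
  have hfun : h = fun u => ‖F u - E u‖ ^ 2 := funext hh
  have hhc : Continuous h := by
    rw [hfun]; exact (hFc.sub hEc).norm.pow 2
  -- properties of G = F - E
  have hG : ∀ u v : X × Θ, ‖(F u - E u) - (F v - E v)‖ ≤ c1 * nU (u - v) := by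
    intro u v
    have he : (F u - E u) - (F v - E v) = (F u - F v) - (E u - E v) := by abel
    rw [he]
    calc ‖(F u - F v) - (E u - E v)‖ ≤ ‖F u - F v‖ + ‖E u - E v‖ := norm_sub_le _ _
    _ ≤ L * nU (u - v) + R * nU (u - v) := add_le_add (hF u v) (hE u v)
    _ = c1 * nU (u - v) := by rw [hc1]; ring
  have hGb : ∀ u : X × Θ, ‖F u - E u‖ ≤ c2 + c1 * nU u := by
    intro u
    calc ‖F u - E u‖ = ‖((F u - E u) - (F 0 - E 0)) + (F 0 - E 0)‖ := by abel_nf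
    _ ≤ ‖(F u - E u) - (F 0 - E 0)‖ + ‖F 0 - E 0‖ := norm_add_le _ _
    _ ≤ c1 * nU (u - 0) + (‖F 0‖ + ‖E 0‖) := add_le_add (hG u 0) (norm_sub_le _ _)
    _ ≤ c1 * nU u + (‖F 0‖ + B) := by rw [sub_zero]; exact add_le_add_right (add_le_add_right hE0 _) _
    _ = c2 + c1 * nU u := by rw [hc2]; ring
  -- pointwise bound
  have hpt : ∀ p : (X × Θ) × (X × Θ),
      |h p.2 - h p.1| ≤ (c1 ^ 2 * (nU p.1 + nU p.2) + 2 * c1 * c2) * nU (p.1 - p.2) := by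
    intro p
    have ha := hGb p.1
    have hb := hGb p.2
    have hd : |‖F p.2 - E p.2‖ - ‖F p.1 - E p.1‖| ≤ c1 * nU (p.1 - p.2) := by
      rw [nU_sub_comm]
      exact (abs_norm_sub_norm_le _ _).trans (hG p.2 p.1)
    rw [hh p.1, hh p.2]
    set a := ‖F p.1 - E p.1‖
    set b := ‖F p.2 - E p.2‖
    have hkey : |b ^ 2 - a ^ 2| = |b - a| * (b + a) := by
      rw [show b ^ 2 - a ^ 2 = (b - a) * (b + a) by ring, abs_mul,
        abs_of_nonneg (by positivity : (0:ℝ) ≤ b + a)]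
    rw [hkey]
    have hba : b + a ≤ 2 * c2 + c1 * (nU p.1 + nU p.2) := by nlinarith
    calc |b - a| * (b + a) ≤ (c1 * nU (p.1 - p.2)) * (2 * c2 + c1 * (nU p.1 + nU p.2)) := by
          exact mul_le_mul hd hba (add_nonneg (norm_nonneg _) (norm_nonneg _))
            (mul_nonneg hc1n (nU_nonneg _))
    _ = (c1 ^ 2 * (nU p.1 + nU p.2) + 2 * c1 * c2) * nU (p.1 - p.2) := by ring
  -- integrability over γ
  have hmfst : AEMeasurable (Prod.fst : (X × Θ) × (X × Θ) → X × Θ) γ :=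
    measurable_fst.aemeasurable
  have hmsnd : AEMeasurable (Prod.snd : (X × Θ) × (X × Θ) → X × Θ) γ :=
    measurable_snd.aemeasurable
  have hnU2m : AEStronglyMeasurable (fun u : X × Θ => nU u ^ 2) (γ.map Prod.fst) :=
    (nU_continuous.pow 2).aestronglyMeasurable
  have hnU2m' : AEStronglyMeasurable (fun u : X × Θ => nU u ^ 2) (γ.map Prod.snd) :=
    (nU_continuous.pow 2).aestronglyMeasurable
  have hint1 : Integrable (fun p : (X × Θ) × (X × Θ) => nU p.1 ^ 2) γ := by
    have h0 := hν; rw [← hfst] at h0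
    exact (integrable_map_measure hnU2m hmfst).mp h0
  have hint2 : Integrable (fun p : (X × Θ) × (X × Θ) => nU p.2 ^ 2) γ := by
    have h0 := hν'; rw [← hsnd] at h0
    exact (integrable_map_measure hnU2m' hmsnd).mp h0
  have hnUdc : Continuous (fun p : (X × Θ) × (X × Θ) => nU (p.1 - p.2)) :=
    nU_continuous.comp (continuous_fst.sub continuous_snd)
  have hintd : Integrable (fun p : (X × Θ) × (X × Θ) => nU (p.1 - p.2) ^ 2) γ := by
    refine Integrable.mono' ((hint1.const_mul 2).add (hint2.const_mul 2))
      (hnUdc.pow 2).aestronglyMeasurable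
      (Filter.Eventually.of_forall fun p => ?_)
    have h1 := nU_sub_le p.1 p.2
    have h2 := nU_nonneg (p.1 - p.2)
    have h3 := nU_nonneg p.1
    have h4 := nU_nonneg p.2
    simp only [Real.norm_eq_abs, Pi.add_apply]
    rw [abs_of_nonneg (by positivity : (0:ℝ) ≤ nU (p.1 - p.2) ^ 2)]
    nlinarith [sq_nonneg (nU p.1 - nU p.2), mul_le_mul h1 h1 h2 (add_nonneg h3 h4)]
  have hintd1 : Integrable (fun p : (X × Θ) × (X × Θ) => nU (p.1 - p.2)) γ := by
    refine Integrable.mono' ((integrable_const (1:ℝ)).add hintd)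
      hnUdc.aestronglyMeasurable (Filter.Eventually.of_forall fun p => ?_)
    have h2 := nU_nonneg (p.1 - p.2)
    simp only [Real.norm_eq_abs, Pi.add_apply]
    rw [abs_of_nonneg h2]
    nlinarith
  have hcross : Integrable
      (fun p : (X × Θ) × (X × Θ) => (nU p.1 + nU p.2) * nU (p.1 - p.2)) γ := by
    refine Integrable.mono' (((hint1.add hint2).const_mul 2).add hintd)
      (((nU_continuous.comp continuous_fst).add
        (nU_continuous.comp continuous_snd)).mul hnUdc).aestronglyMeasurable
      (Filter.Eventually.of_forall fun p => ?_)
    have h1 := nU_sub_le p.1 p.2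
    have h2 := nU_nonneg (p.1 - p.2)
    have h3 := nU_nonneg p.1
    have h4 := nU_nonneg p.2
    simp only [Real.norm_eq_abs, Pi.add_apply]
    rw [abs_of_nonneg (by positivity : (0:ℝ) ≤ (nU p.1 + nU p.2) * nU (p.1 - p.2))]
    nlinarith [sq_nonneg (nU p.1 + nU p.2 - nU (p.1 - p.2)), sq_nonneg (nU p.1 - nU p.2)]
  have hsum2 : Integrable (fun p : (X × Θ) × (X × Θ) => (nU p.1 + nU p.2) ^ 2) γ := by
    refine Integrable.mono' ((hint1.const_mul 2).add (hint2.const_mul 2))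
      (((nU_continuous.comp continuous_fst).add
        (nU_continuous.comp continuous_snd)).pow 2).aestronglyMeasurable
      (Filter.Eventually.of_forall fun p => ?_)
    have h3 := nU_nonneg p.1
    have h4 := nU_nonneg p.2
    simp only [Real.norm_eq_abs, Pi.add_apply]
    rw [abs_of_nonneg (by positivity : (0:ℝ) ≤ (nU p.1 + nU p.2) ^ 2)]
    nlinarith [sq_nonneg (nU p.1 - nU p.2)]
  -- integrability of h along marginals
  have hbpt : ∀ u : X × Θ, |h u| ≤ 2 * c2 ^ 2 + 2 * c1 ^ 2 * nU u ^ 2 := by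
    intro u
    have h1 := hGb u
    have h2 := norm_nonneg (F u - E u)
    have h3 := nU_nonneg u
    rw [hh u, abs_of_nonneg (by positivity : (0:ℝ) ≤ ‖F u - E u‖ ^ 2)]
    nlinarith [mul_nonneg hc1n h3, sq_nonneg (c2 - c1 * nU u),
      mul_nonneg (mul_nonneg hc1n hc1n) (sq_nonneg (nU u))]
  have hinth1 : Integrable (fun p : (X × Θ) × (X × Θ) => h p.1) γ := by
    refine Integrable.mono' ((integrable_const (2 * c2 ^ 2)).add (hint1.const_mul (2 * c1 ^ 2)))
      (hhc.comp continuous_fst).aestronglyMeasurable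
      (Filter.Eventually.of_forall fun p => ?_)
    simpa [Real.norm_eq_abs, Pi.add_apply] using hbpt p.1
  have hinth2 : Integrable (fun p : (X × Θ) × (X × Θ) => h p.2) γ := by
    refine Integrable.mono' ((integrable_const (2 * c2 ^ 2)).add (hint2.const_mul (2 * c1 ^ 2)))
      (hhc.comp continuous_snd).aestronglyMeasurable
      (Filter.Eventually.of_forall fun p => ?_)
    simpa [Real.norm_eq_abs, Pi.add_apply] using hbpt p.2
  -- rewrite marginal integrals
  have hIν' : (∫ u, h u ∂ν') = ∫ p, h p.2 ∂γ := by
    rw [← hsnd, integral_map hmsnd hhc.aestronglyMeasurable]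
  have hIν : (∫ u, h u ∂ν) = ∫ p, h p.1 ∂γ := by
    rw [← hfst, integral_map hmfst hhc.aestronglyMeasurable]
  have hm1 : (∫ u, nU u ^ 2 ∂ν) = ∫ p, nU p.1 ^ 2 ∂γ := by
    rw [← hfst, integral_map hmfst (f := fun u : X × Θ => nU u ^ 2) (nU_continuous.pow 2).aestronglyMeasurable]
  have hm2 : (∫ u, nU u ^ 2 ∂ν') = ∫ p, nU p.2 ^ 2 ∂γ := by
    rw [← hsnd, integral_map hmsnd (f := fun u : X × Θ => nU u ^ 2) (nU_continuous.pow 2).aestronglyMeasurable]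
  -- integrable bound function
  have hboundInt : Integrable (fun p : (X × Θ) × (X × Θ) =>
      (c1 ^ 2 * (nU p.1 + nU p.2) + 2 * c1 * c2) * nU (p.1 - p.2)) γ := by
    have he : (fun p : (X × Θ) × (X × Θ) =>
        (c1 ^ 2 * (nU p.1 + nU p.2) + 2 * c1 * c2) * nU (p.1 - p.2))
        = fun p => c1 ^ 2 * ((nU p.1 + nU p.2) * nU (p.1 - p.2))
            + (2 * c1 * c2) * nU (p.1 - p.2) := by
      funext p; ring
    rw [he]
    exact (hcross.const_mul _).add (hintd1.const_mul _)
  -- main chain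
  set Sd := Real.sqrt (∫ p, nU (p.1 - p.2) ^ 2 ∂γ) with hSd
  have hSdn : 0 ≤ Sd := Real.sqrt_nonneg _
  have key : |(∫ u, h u ∂ν') - ∫ u, h u ∂ν|
      ≤ ∫ p, (c1 ^ 2 * (nU p.1 + nU p.2) + 2 * c1 * c2) * nU (p.1 - p.2) ∂γ := by
    rw [hIν', hIν, ← integral_sub hinth2 hinth1]
    calc |∫ p, (h p.2 - h p.1) ∂γ| ≤ ∫ p, |h p.2 - h p.1| ∂γ := by
          simpa [Real.norm_eq_abs] using
            norm_integral_le_integral_norm (fun p : (X × Θ) × (X × Θ) => h p.2 - h p.1) (μ := γ)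
    _ ≤ ∫ p, (c1 ^ 2 * (nU p.1 + nU p.2) + 2 * c1 * c2) * nU (p.1 - p.2) ∂γ :=
          integral_mono (hinth2.sub hinth1).abs hboundInt (fun p => hpt p)
  have hsplit : (∫ p, (c1 ^ 2 * (nU p.1 + nU p.2) + 2 * c1 * c2) * nU (p.1 - p.2) ∂γ)
      = c1 ^ 2 * (∫ p, (nU p.1 + nU p.2) * nU (p.1 - p.2) ∂γ)
        + 2 * c1 * c2 * ∫ p, nU (p.1 - p.2) ∂γ := by
    rw [← integral_const_mul, ← integral_const_mul,
      ← integral_add (hcross.const_mul _) (hintd1.const_mul _)]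
    refine integral_congr_ae (Filter.Eventually.of_forall fun p => ?_)
    ring
  -- Cauchy-Schwarz bounds
  have hE1 : (∫ p, nU (p.1 - p.2) ∂γ) ≤ Sd := by
    have hcs := cs_integral (μ := γ) (f := fun p => nU (p.1 - p.2)) (g := fun _ => 1)
      (fun p => nU_nonneg _) (fun _ => zero_le_one)
      hnUdc.aestronglyMeasurable aestronglyMeasurable_const hintd
      (by simpa using integrable_const (1:ℝ))
    simpa using hcs
  have hD : (∫ p, (nU p.1 + nU p.2) * nU (p.1 - p.2) ∂γ)
      ≤ Real.sqrt (∫ p, (nU p.1 + nU p.2) ^ 2 ∂γ) * Sd :=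
    cs_integral (fun p => add_nonneg (nU_nonneg _) (nU_nonneg _)) (fun p => nU_nonneg _)
      ((nU_continuous.comp continuous_fst).add
        (nU_continuous.comp continuous_snd)).aestronglyMeasurable
      hnUdc.aestronglyMeasurable hsum2 hintd
  have hDD : (∫ p, (nU p.1 + nU p.2) ^ 2 ∂γ)
      ≤ 2 * ((∫ u, nU u ^ 2 ∂ν) + ∫ u, nU u ^ 2 ∂ν') := by
    rw [hm1, hm2]
    calc (∫ p, (nU p.1 + nU p.2) ^ 2 ∂γ)
        ≤ ∫ p, 2 * nU p.1 ^ 2 + 2 * nU p.2 ^ 2 ∂γ := by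
          refine integral_mono hsum2 ((hint1.const_mul 2).add (hint2.const_mul 2)) fun p => ?_
          simp only [Pi.add_apply]
          nlinarith [sq_nonneg (nU p.1 - nU p.2)]
    _ = 2 * ((∫ p, nU p.1 ^ 2 ∂γ) + ∫ p, nU p.2 ^ 2 ∂γ) := by
          rw [integral_add (hint1.const_mul 2) (hint2.const_mul 2),
            integral_const_mul, integral_const_mul]
          ring
  have hDfin : (∫ p, (nU p.1 + nU p.2) * nU (p.1 - p.2) ∂γ)
      ≤ Real.sqrt (2 * ((∫ u, nU u ^ 2 ∂ν) + ∫ u, nU u ^ 2 ∂ν')) * Sd :=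
    hD.trans (mul_le_mul_of_nonneg_right (Real.sqrt_le_sqrt hDD) hSdn)
  calc |(∫ u, h u ∂ν') - ∫ u, h u ∂ν|
      ≤ c1 ^ 2 * (∫ p, (nU p.1 + nU p.2) * nU (p.1 - p.2) ∂γ)
        + 2 * c1 * c2 * ∫ p, nU (p.1 - p.2) ∂γ := by rw [← hsplit]; exact key
  _ ≤ c1 ^ 2 * (Real.sqrt (2 * ((∫ u, nU u ^ 2 ∂ν) + ∫ u, nU u ^ 2 ∂ν')) * Sd)
        + 2 * c1 * c2 * Sd := by
      refine add_le_add (mul_le_mul_of_nonneg_left hDfin (by positivity))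
        (mul_le_mul_of_nonneg_left hE1 (by positivity))
  _ = (c1 ^ 2 * Real.sqrt (2 * ((∫ u, nU u ^ 2 ∂ν) + ∫ u, nU u ^ 2 ∂ν'))
        + 2 * c1 * c2) * Sd := by ring
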